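/- arXiv:2003.00701 — 4 statements merged into one kernel-verified Lean document; each statement's English description precedes it below -/
import Mathlib

section
/- Let λ > 0, 0 ≤ E < 1, set λ₊ = √(1+E)·√λ/2 and I = [−λ₊, λ₊]. Let R : I → ℝ be continuous and satisfy |R(x) − ((−1+λ)x − 4x³)| ≤ E·λ·|x| for all x ∈ I. Set λ₋ = √(1−E)·√λ/2, W₋ = [−λ₊, −λ₋], W₊ = [λ₋, λ₊]. Then R(λ₋) ≥ −λ₋ and R(λ₊) ≤ −λ₊, so by the intermediate value theorem W₋ ⊆ R(W₊); symmetrically W₊ ⊆ R(W₋). Consequently there exist x₊ ∈ W₊ and x₋ ∈ W₋ with R(x₊) = x₋ and R(x₋) = x₊, i.e. R has a 2-periodic orbit alternating between W₋ and W₊. -/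
open Set

/-- **Proposition 4.1(i).** If `R` is continuous on `I = [−λ₊, λ₊]` with
`|R(x) − ((−1+λ)x − 4x³)| ≤ Eλ|x|`, where `λ₊ = √(1+E)√λ/2`, then `R(λ₋) ≥ −λ₋`,
`R(λ₊) ≤ −λ₊`, `W₋ ⊆ R(W₊)` and `W₊ ⊆ R(W₋)`, and `R` has a 2-periodic orbit alternating
between `W₋ = [−λ₊, −λ₋]` and `W₊ = [λ₋, λ₊]`, with `λ₋ = √(1−E)√λ/2`. -/
theorem stmt8 (lam E : ℝ) (hlam : 0 < lam) (hE0 : 0 ≤ E) (hE1 : E < 1)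
    (R : ℝ → ℝ)
    (lp lm : ℝ) (hlp : lp = Real.sqrt (1 + E) * Real.sqrt lam / 2)
    (hlm : lm = Real.sqrt (1 - E) * Real.sqrt lam / 2)
    (hRcont : ContinuousOn R (Set.Icc (-lp) lp))
    (hRerr : ∀ x ∈ Set.Icc (-lp) lp,
      |R x - ((-1 + lam) * x - 4 * x ^ 3)| ≤ E * lam * |x|) :
    R lm ≥ -lm ∧ R lp ≤ -lp ∧
    Set.Icc (-lp) (-lm) ⊆ R '' Set.Icc lm lp ∧
    Set.Icc lm lp ⊆ R '' Set.Icc (-lp) (-lm) ∧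
    ∃ xp ∈ Set.Icc lm lp, ∃ xm ∈ Set.Icc (-lp) (-lm), R xp = xm ∧ R xm = xp := by
  have hlam' : (0:ℝ) ≤ lam := hlam.le
  have hE1' : (0:ℝ) ≤ 1 - E := by linarith
  have hE1p : (0:ℝ) ≤ 1 + E := by linarith
  have hlm0 : 0 ≤ lm := by rw [hlm]; positivity
  have hlp0 : 0 ≤ lp := by rw [hlp]; positivity
  have hmle : lm ≤ lp := by
    have hs : Real.sqrt (1 - E) ≤ Real.sqrt (1 + E) := Real.sqrt_le_sqrt (by linarith)
    rw [hlm, hlp]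
    have h0 : 0 ≤ Real.sqrt lam := Real.sqrt_nonneg _
    nlinarith
  have hlmsq : lm ^ 2 = (1 - E) * lam / 4 := by
    rw [hlm, div_pow, mul_pow, Real.sq_sqrt hE1', Real.sq_sqrt hlam']; ring
  have hlpsq : lp ^ 2 = (1 + E) * lam / 4 := by
    rw [hlp, div_pow, mul_pow, Real.sq_sqrt hE1p, Real.sq_sqrt hlam']; ring
  have hlmcube : lm ^ 3 = (1 - E) * lam / 4 * lm := by rw [pow_succ, hlmsq]
  have hlpcube : lp ^ 3 = (1 + E) * lam / 4 * lp := by rw [pow_succ, hlpsq]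
  have hmemlm : lm ∈ Icc (-lp) lp := ⟨by linarith, hmle⟩
  have hmemlp : lp ∈ Icc (-lp) lp := ⟨by linarith, le_refl _⟩
  have hmemnlm : -lm ∈ Icc (-lp) lp := ⟨by linarith, by linarith⟩
  have hmemnlp : -lp ∈ Icc (-lp) lp := ⟨le_refl _, by linarith⟩
  -- the four boundary estimates
  have h1 : R lm ≥ -lm := by
    have h := (abs_le.mp (hRerr lm hmemlm)).1
    rw [abs_of_nonneg hlm0] at h
    nlinarith [h, hlmcube]
  have h2 : R lp ≤ -lp := by
    have h := (abs_le.mp (hRerr lp hmemlp)).2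
    rw [abs_of_nonneg hlp0] at h
    nlinarith [h, hlpcube]
  have h3 : R (-lm) ≤ lm := by
    have h := (abs_le.mp (hRerr (-lm) hmemnlm)).2
    rw [abs_neg, abs_of_nonneg hlm0] at h
    nlinarith [h, hlmcube]
  have h4 : R (-lp) ≥ lp := by
    have h := (abs_le.mp (hRerr (-lp) hmemnlp)).1
    rw [abs_neg, abs_of_nonneg hlp0] at h
    nlinarith [h, hlpcube]
  -- the two covering relations
  have hsubP : Icc lm lp ⊆ Icc (-lp) lp := Icc_subset_Icc (by linarith) (le_refl _)
  have hsubM : Icc (-lp) (-lm) ⊆ Icc (-lp) lp := Icc_subset_Icc (le_refl _) (by linarith)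
  have hcontP : ContinuousOn R (Icc lm lp) := hRcont.mono hsubP
  have hcontM : ContinuousOn R (Icc (-lp) (-lm)) := hRcont.mono hsubM
  have hcov1 : Icc (-lp) (-lm) ⊆ R '' Icc lm lp :=
    (Icc_subset_Icc h2 h1).trans (intermediate_value_Icc' hmle hcontP)
  have hcov2 : Icc lm lp ⊆ R '' Icc (-lp) (-lm) :=
    (Icc_subset_Icc h3 h4).trans (intermediate_value_Icc' (by linarith) hcontM)
  refine ⟨h1, h2, hcov1, hcov2, ?_⟩
  -- construct the periodic orbit
  -- b : first point of W₊ mapped to -lp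
  set S : Set ℝ := Icc lm lp ∩ R ⁻¹' {-lp} with hS
  have hSclosed : IsClosed S := hcontP.preimage_isClosed_of_isClosed isClosed_Icc isClosed_singleton
  have hSne : S.Nonempty := by
    obtain ⟨x, hx, hRx⟩ := hcov1 ⟨le_refl _, by linarith⟩
    exact ⟨x, hx, hRx⟩
  have hSbdd : BddBelow S := ⟨lm, fun x hx => hx.1.1⟩
  set b := sInf S with hb
  have hbS : b ∈ S := hSclosed.csInf_mem hSne hSbdd
  have hbmem : b ∈ Icc lm lp := hbS.1
  have hRb : R b = -lp := hbS.2
  have hbmin : ∀ y ∈ S, b ≤ y := fun y hy => csInf_le hSbdd hy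
  -- a : last point of [lm, b] mapped to -lm
  set T : Set ℝ := Icc lm b ∩ R ⁻¹' {-lm} with hT
  have hsubT : Icc lm b ⊆ Icc (-lp) lp := Icc_subset_Icc (by linarith) hbmem.2
  have hcontT : ContinuousOn R (Icc lm b) := hRcont.mono hsubT
  have hTclosed : IsClosed T := hcontT.preimage_isClosed_of_isClosed isClosed_Icc isClosed_singleton
  have hTne : T.Nonempty := by
    obtain ⟨x, hx, hRx⟩ := intermediate_value_Icc' hbmem.1 hcontT
      (show -lm ∈ Icc (R b) (R lm) from ⟨by rw [hRb]; linarith, by linarith⟩)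
    exact ⟨x, hx, hRx⟩
  have hTbdd : BddAbove T := ⟨b, fun x hx => hx.1.2⟩
  set a := sSup T with ha
  have haT : a ∈ T := hTclosed.csSup_mem hTne hTbdd
  have hamem : a ∈ Icc lm b := haT.1
  have hRa : R a = -lm := haT.2
  have hamax : ∀ y ∈ T, y ≤ a := fun y hy => le_csSup hTbdd hy
  have hab : a ≤ b := hamem.2
  have halm : lm ≤ a := hamem.1
  have hblp : b ≤ lp := hbmem.2
  have hsubab : Icc a b ⊆ Icc (-lp) lp := Icc_subset_Icc (by linarith) hblp
  have hcontab : ContinuousOn R (Icc a b) := hRcont.mono hsubab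
  -- R maps [a,b] into W₋
  have hmaps : ∀ x ∈ Icc a b, R x ∈ Icc (-lp) (-lm) := by
    intro x hx
    constructor
    · by_contra hcon
      push_neg at hcon
      have hsub' : Icc a x ⊆ Icc (-lp) lp := Icc_subset_Icc (by linarith) (by linarith [hx.2])
      obtain ⟨y, hy, hRy⟩ := intermediate_value_Icc' hx.1 (hRcont.mono hsub')
        (show -lp ∈ Icc (R x) (R a) from ⟨hcon.le, by rw [hRa]; linarith⟩)
      have hyS : y ∈ S := ⟨⟨by linarith [hy.1], by linarith [hy.2, hx.2]⟩, hRy⟩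
      have : b ≤ y := hbmin y hyS
      have hyx : y = x := le_antisymm (le_trans hy.2 (le_refl x)) (by linarith [hy.2, hx.2])
      rw [hyx] at hRy
      linarith [hRy ▸ hcon]
    · by_contra hcon
      push_neg at hcon
      have hsub' : Icc x b ⊆ Icc (-lp) lp := Icc_subset_Icc (by linarith [hx.1]) hblp
      obtain ⟨y, hy, hRy⟩ := intermediate_value_Icc' hx.2 (hRcont.mono hsub')
        (show -lm ∈ Icc (R b) (R x) from ⟨by rw [hRb]; linarith, hcon.le⟩)
      have hyT : y ∈ T := ⟨⟨by linarith [hy.1, hx.1], hy.2⟩, hRy⟩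
      have : y ≤ a := hamax y hyT
      have hyx : y = x := le_antisymm (by linarith [hy.1, hx.1]) hy.1
      rw [hyx] at hRy
      rw [hRy] at hcon
      linarith
  -- F = R ∘ R - id on [a, b]
  have hmapsTo : MapsTo R (Icc a b) (Icc (-lp) lp) := fun x hx => hsubM (hmaps x hx)
  have hFcont : ContinuousOn (fun x => R (R x) - x) (Icc a b) :=
    (hRcont.comp hcontab hmapsTo).sub continuousOn_id
  have hFa : R (R a) - a ≤ 0 := by rw [hRa]; linarith
  have hFb : R (R b) - b ≥ 0 := by rw [hRb]; linarith
  obtain ⟨xp, hxp, hFxp⟩ := intermediate_value_Icc hab hFcont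
    (show (0:ℝ) ∈ Icc (R (R a) - a) (R (R b) - b) from ⟨hFa, hFb⟩)
  have hFxp' : R (R xp) - xp = 0 := hFxp
  have hRRxp : R (R xp) = xp := by linarith
  refine ⟨xp, ⟨by linarith [hxp.1], by linarith [hxp.2]⟩, R xp, hmaps xp hxp, rfl, hRRxp⟩
end

section
/- Let 0 ≤ E < 1/2 and 0 < λ < 4/3. Suppose x ∈ ℝ satisfies 0 < 4x² < (1 − E)λ, and γ ∈ ℝ satisfies |γ| ≤ Eλ. Then |(−1 + λ)x − 4x³ + γx| < |x|. -/
/-- For `0 ≤ E < 1/2`, `0 < λ < 4/3`, `0 < 4x² < (1 − E)λ` and `|γ| ≤ Eλ`,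
one has `|(−1 + λ)x − 4x³ + γx| < |x|`. -/
theorem stmt9 (E lam x γ : ℝ) (hE0 : 0 ≤ E) (hE : E < 1 / 2)
    (hlam0 : 0 < lam) (hlam : lam < 4 / 3)
    (hx0 : 0 < 4 * x ^ 2) (hx : 4 * x ^ 2 < (1 - E) * lam)
    (hγ : |γ| ≤ E * lam) :
    |(-1 + lam) * x - 4 * x ^ 3 + γ * x| < |x| := by
  have hγl : -(E * lam) ≤ γ := (abs_le.mp hγ).1
  have hγu : γ ≤ E * lam := (abs_le.mp hγ).2
  have h1 : 4 * x ^ 2 < lam + γ := by nlinarith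
  have h2 : lam + γ < 2 := by nlinarith
  have key : |(-1 + lam) * x - 4 * x ^ 3 + γ * x| = |(-1 + lam - 4 * x ^ 2 + γ)| * |x| := by
    rw [← abs_mul]; ring_nf
  rw [key]
  have hxne : (0:ℝ) < |x| := abs_pos.mpr (by nlinarith)
  have : |(-1 + lam - 4 * x ^ 2 + γ)| < 1 := by
    rw [abs_lt]; constructor <;> nlinarith
  nlinarith [abs_nonneg ((-1 + lam - 4 * x ^ 2 + γ))]
end

section
/- Let 0 ≤ E < 1/2 and 0 < λ < 4/3 and suppose R : ℝ → ℝ is a continuous injective map with R(0) = 0 satisfying |R'(x) − (−1 + λ − 12x²)| ≤ Eλ wherever differentiable on I_λ = [−√(1+E)√λ/2, √(1+E)√λ/2], and R is differentiable on I_λ. If x₋ < 0 < x₊ and x'₋ < 0 < x'₊ are two 2-periodic orbits of R with x₋, x'₋ ∈ [−√(1+E)√λ/2, −√(1−E)√λ/2] and x₊, x'₊ ∈ [√(1−E)√λ/2, √(1+E)√λ/2], then x₋ = x'₋ and x₊ = x'₊ (the alternating 2-periodic orbit in these windows is unique). -/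
/-- **Proposition 4.1(ii), uniqueness.** With `0 ≤ E < 1/2`, `0 < λ < 4/3`,
`R : ℝ → ℝ` continuous, injective, `R(0) = 0`, differentiable on
`I_λ = [−√(1+E)√λ/2, √(1+E)√λ/2]` with `|R'(x) − (−1 + λ − 12x²)| ≤ Eλ` there, any two
2-periodic orbits alternating between the windows
`[−√(1+E)√λ/2, −√(1−E)√λ/2]` and `[√(1−E)√λ/2, √(1+E)√λ/2]` coincide. -/
theorem stmt11 (E lam : ℝ) (hE0 : 0 ≤ E) (hE : E < 1 / 2)
    (hlam0 : 0 < lam) (hlam : lam < 4 / 3)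
    (R : ℝ → ℝ) (hRcont : Continuous R) (hRinj : Function.Injective R) (hR0 : R 0 = 0)
    (lp lm : ℝ) (hlp : lp = Real.sqrt (1 + E) * Real.sqrt lam / 2)
    (hlm : lm = Real.sqrt (1 - E) * Real.sqrt lam / 2)
    (hRdiff : ∀ x ∈ Set.Icc (-lp) lp, DifferentiableAt ℝ R x)
    (hRderiv : ∀ x ∈ Set.Icc (-lp) lp, |deriv R x - (-1 + lam - 12 * x ^ 2)| ≤ E * lam)
    (xm xp xm' xp' : ℝ)
    (hxm : xm ∈ Set.Icc (-lp) (-lm)) (hxp : xp ∈ Set.Icc lm lp)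
    (hxm' : xm' ∈ Set.Icc (-lp) (-lm)) (hxp' : xp' ∈ Set.Icc lm lp)
    (hxm0 : xm < 0) (hxp0 : 0 < xp) (hxm'0 : xm' < 0) (hxp'0 : 0 < xp')
    (horb : R xm = xp ∧ R xp = xm) (horb' : R xm' = xp' ∧ R xp' = xm') :
    xm = xm' ∧ xp = xp' := by
  have hlm0 : 0 ≤ lm := by
    rw [hlm]; positivity
  have hlp0 : 0 ≤ lp := by
    rw [hlp]; positivity
  have hE1 : (0:ℝ) ≤ 1 - E := by linarith
  have hsq : lm ^ 2 = (1 - E) * lam / 4 := by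
    rw [hlm]
    rw [div_pow, mul_pow, Real.sq_sqrt hE1, Real.sq_sqrt hlam0.le]
    norm_num
  -- derivative bound: on both windows, deriv R < -1
  have hd : ∀ c ∈ Set.Icc (-lp) lp, lm ^ 2 ≤ c ^ 2 → deriv R c < -1 := by
    intro c hc hc2
    have h := hRderiv c hc
    have h1 : deriv R c ≤ -1 + lam - 12 * c ^ 2 + E * lam := by
      have := abs_le.mp h
      linarith [this.2]
    nlinarith [hc2, hsq]
  -- MVT consequence: on either window, a < b implies R b - R a < -(b - a)
  have mvt : ∀ a b : ℝ, a < b → -lp ≤ a → b ≤ lp → (lm ≤ a ∨ b ≤ -lm) →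
      R b - R a < -(b - a) := by
    intro a b hab ha hb hwin
    have hsub : Set.Icc a b ⊆ Set.Icc (-lp) lp := Set.Icc_subset_Icc ha hb
    have hcont : ContinuousOn R (Set.Icc a b) := hRcont.continuousOn
    have hdiff : DifferentiableOn ℝ R (Set.Ioo a b) := fun x hx =>
      (hRdiff x (hsub (Set.Ioo_subset_Icc_self hx))).differentiableWithinAt
    obtain ⟨c, hc, hslope⟩ := exists_deriv_eq_slope R hab hcont hdiff
    have hcI : c ∈ Set.Icc (-lp) lp := hsub (Set.Ioo_subset_Icc_self hc)
    have hc2 : lm ^ 2 ≤ c ^ 2 := by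
      rcases hwin with hw | hw
      · nlinarith [hc.1, hc.2]
      · nlinarith [hc.1, hc.2]
    have hlt : deriv R c < -1 := hd c hcI hc2
    rw [hslope] at hlt
    have hba : 0 < b - a := by linarith
    calc R b - R a = (R b - R a) / (b - a) * (b - a) := by field_simp
    _ < -1 * (b - a) := by exact mul_lt_mul_of_pos_right hlt hba
    _ = -(b - a) := by ring
  obtain ⟨h1, h2⟩ := horb
  obtain ⟨h1', h2'⟩ := horb'
  have hpp : xp = xp' := by
    rcases lt_trichotomy xp xp' with h | h | h
    · have k1 := mvt xp xp' h (by linarith [hxp.1, hlm0, hlp0]) hxp'.2 (Or.inl hxp.1)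
      rw [h2, h2'] at k1
      have hmm : xm' < xm := by linarith
      have k2 := mvt xm' xm hmm hxm'.1 (by linarith [hxm.2, hlm0, hlp0]) (Or.inr hxm.2)
      rw [h1, h1'] at k2
      linarith
    · exact h
    · have k1 := mvt xp' xp h (by linarith [hxp'.1, hlm0, hlp0]) hxp.2 (Or.inl hxp'.1)
      rw [h2, h2'] at k1
      have hmm : xm < xm' := by linarith
      have k2 := mvt xm xm' hmm hxm.1 (by linarith [hxm'.2, hlm0, hlp0]) (Or.inr hxm'.2)
      rw [h1, h1'] at k2
      linarith
  refine ⟨?_, hpp⟩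
  rw [← h2, ← h2', hpp]
end

section
/- Let λ > 0, 0 ≤ E_R, E_K, set λ₊ = √(1+E_R)√λ/2 and P_K(λ,x) = −2λx − 2x² + 8x³. Suppose k : [−λ₊, λ₊] → ℝ satisfies |k(x) − P_K(λ, x)| ≤ 2E_K λ |x| for all x. Then for all x ∈ [−λ₊, λ₊], k(x) ≥ min over x ∈ [−λ₊, λ₊] of (P_K(λ,x) − 2E_K λ |x|), and under the additional constraints 0 ≤ E_R < 1/2, 0 ≤ E_K ≤ 9/2, 0 ≤ λ < 1/43, this minimum is attained at x = −λ₊, giving k(x) ≥ −(λ/2)(1 + E_R + 2E_R√((1+E_R)λ) + 2E_K√((1+E_R)λ)). -/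
/-- **lower bound of Proposition 4.2.** If
`|k(x) − P_K(λ,x)| ≤ 2E_Kλ|x|` on `[−λ₊, λ₊]` with `λ₊ = √(1+E_R)√λ/2` and
`P_K(λ,x) = −2λx − 2x² + 8x³`, then `k(x)` is bounded below on `[−λ₊, λ₊]` by the minimum
of `P_K(λ,·) − 2E_Kλ|·|` there; and if moreover `E_R < 1/2`, `E_K ≤ 9/2`, `λ < 1/43`, this
minimum is attained at `x = −λ₊`, giving
`k(x) ≥ −(λ/2)(1 + E_R + 2E_R√((1+E_R)λ) + 2E_K√((1+E_R)λ))`. -/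
theorem stmt12 (lam ER EK : ℝ) (hlam : 0 < lam) (hER : 0 ≤ ER) (hEK : 0 ≤ EK)
    (lp : ℝ) (hlp : lp = Real.sqrt (1 + ER) * Real.sqrt lam / 2)
    (PK : ℝ → ℝ) (hPK : PK = fun x => -2 * lam * x - 2 * x ^ 2 + 8 * x ^ 3)
    (k : ℝ → ℝ)
    (hk : ∀ x ∈ Set.Icc (-lp) lp, |k x - PK x| ≤ 2 * EK * lam * |x|) :
    (∀ x ∈ Set.Icc (-lp) lp,
      k x ≥ sInf ((fun t => PK t - 2 * EK * lam * |t|) '' Set.Icc (-lp) lp)) ∧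
    (ER < 1 / 2 → EK ≤ 9 / 2 → lam < 1 / 43 →
      (∀ t ∈ Set.Icc (-lp) lp,
        PK (-lp) - 2 * EK * lam * |(-lp)| ≤ PK t - 2 * EK * lam * |t|) ∧
      (∀ x ∈ Set.Icc (-lp) lp,
        k x ≥ -(lam / 2) * (1 + ER + 2 * ER * Real.sqrt ((1 + ER) * lam)
          + 2 * EK * Real.sqrt ((1 + ER) * lam)))) := by
  have hlp0 : 0 ≤ lp := by
    rw [hlp]
    positivity
  have hlpsq : 4 * lp ^ 2 = (1 + ER) * lam := by
    rw [hlp]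
    have h1 : Real.sqrt (1 + ER) ^ 2 = 1 + ER := Real.sq_sqrt (by linarith)
    have h2 : Real.sqrt lam ^ 2 = lam := Real.sq_sqrt hlam.le
    ring_nf
    nlinarith [h1, h2]
  have hfx : ∀ x ∈ Set.Icc (-lp) lp, PK x - 2 * EK * lam * |x| ≤ k x := by
    intro x hx
    have := hk x hx
    have := abs_le.mp this
    linarith [this.1]
  constructor
  · intro x hx
    have hcont : ContinuousOn (fun t => PK t - 2 * EK * lam * |t|) (Set.Icc (-lp) lp) := by
      rw [hPK]
      fun_prop
    have hcomp : IsCompact ((fun t => PK t - 2 * EK * lam * |t|) '' Set.Icc (-lp) lp) :=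
      (isCompact_Icc).image_of_continuousOn hcont
    have hbdd : BddBelow ((fun t => PK t - 2 * EK * lam * |t|) '' Set.Icc (-lp) lp) :=
      hcomp.bddBelow
    have hmem : PK x - 2 * EK * lam * |x| ∈
        (fun t => PK t - 2 * EK * lam * |t|) '' Set.Icc (-lp) lp :=
      Set.mem_image_of_mem _ hx
    have := csInf_le hbdd hmem
    have := hfx x hx
    linarith
  · intro hER' hEK' hlam'
    have hlpq : lp ≤ 1 / 4 := by
      nlinarith [hlpsq, sq_nonneg (lp - 1/4)]
    have hlamlp : lam ≤ 4 * lp ^ 2 := by nlinarith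
    have hmin : ∀ t ∈ Set.Icc (-lp) lp,
        PK (-lp) - 2 * EK * lam * |(-lp)| ≤ PK t - 2 * EK * lam * |t| := by
      intro t ht
      obtain ⟨ht1, ht2⟩ := ht
      rw [hPK]
      simp only [abs_neg, abs_of_nonneg hlp0]
      rcases le_or_gt 0 t with h0 | h0
      · rw [abs_of_nonneg h0]
        nlinarith [mul_nonneg (mul_nonneg (sub_nonneg.mpr ht2) (by linarith : (0:ℝ) ≤ lp + t))
            (by linarith : (0:ℝ) ≤ 1 - 4 * t),
          mul_nonneg (by nlinarith : (0:ℝ) ≤ 4 * lp ^ 2 - lam) h0,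
          mul_nonneg (mul_nonneg hEK hlam.le) (sub_nonneg.mpr ht2),
          mul_nonneg (mul_nonneg hER hlam.le) hlp0]
      · rw [abs_of_neg h0]
        have hs : 0 ≤ lp + t := by linarith
        have hlplam : lam ≤ lp := by nlinarith
        nlinarith [mul_nonneg (sub_nonneg.mpr (by linarith : -t ≤ lp))
            (sub_nonneg.mpr hlplam),
          mul_nonneg (sub_nonneg.mpr (by linarith : -t ≤ lp)) hs,
          mul_nonneg (mul_nonneg (sub_nonneg.mpr (by linarith : -t ≤ lp)) hs) hlp0,
          mul_nonneg (mul_nonneg hEK hlam.le) (sub_nonneg.mpr (by linarith : -t ≤ lp)),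
          mul_nonneg (mul_nonneg (sub_nonneg.mpr (by linarith : -t ≤ lp)) hs) hs]
    refine ⟨hmin, ?_⟩
    intro x hx
    have hsq : Real.sqrt ((1 + ER) * lam) = 2 * lp := by
      rw [hlp, Real.sqrt_mul (by linarith : (0:ℝ) ≤ 1 + ER)]
      ring
    have hval : -(lam / 2) * (1 + ER + 2 * ER * Real.sqrt ((1 + ER) * lam)
        + 2 * EK * Real.sqrt ((1 + ER) * lam))
        = PK (-lp) - 2 * EK * lam * |(-lp)| := by
      rw [hsq, hPK]
      simp only [abs_neg, abs_of_nonneg hlp0]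
      nlinarith [hlpsq]
    rw [hval]
    calc PK (-lp) - 2 * EK * lam * |(-lp)| ≤ PK x - 2 * EK * lam * |x| := hmin x hx
      _ ≤ k x := hfx x hx
end
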